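/- Operator-averaging step in convex split: let ρ_{PQ} ≤ 2^k ρ_P ⊗ σ_Q, and define τ_{PQ} = (1/n) ρ_{PQ} + ((n-1)/n) ρ_P ⊗ σ_Q. Then τ_{PQ} ≤ (1 + (2^k - 1)/n) ρ_P ⊗ σ_Q, and consequently D(ρ_{PQ} ‖ τ_{PQ}) ≥ D(ρ_{PQ} ‖ ρ_P ⊗ σ_Q) − log₂(1 + (2^k − 1)/n). -/

import Mathlib

open scoped Matrix Kronecker BigOperators ComplexOrder
open Matrix

noncomputable section

namespace QIT

variable {n : Type*} [Fintype n] [DecidableEq n]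

/-- Functional calculus for Hermitian matrices (junk value `0` otherwise). -/
def hcfc (A : Matrix n n ℂ) (f : ℝ → ℝ) : Matrix n n ℂ :=
  if h : A.IsHermitian then
    (h.eigenvectorUnitary : Matrix n n ℂ) * Matrix.diagonal ((↑) ∘ f ∘ h.eigenvalues) *
      (star h.eigenvectorUnitary : Matrix n n ℂ)
  else 0

/-- Positive semidefinite square root (junk otherwise). -/
def msqrt (A : Matrix n n ℂ) : Matrix n n ℂ := hcfc A Real.sqrt

/-- Matrix logarithm on the support (log 0 = 0). -/
def mlog (A : Matrix n n ℂ) : Matrix n n ℂ := hcfc A Real.log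

/-- Trace norm. -/
def traceNorm (A : Matrix n n ℂ) : ℝ := ((msqrt (Aᴴ * A)).trace).re

/-- Fidelity `‖√ρ√σ‖₁`. -/
def fidelity (ρ σ : Matrix n n ℂ) : ℝ := traceNorm (msqrt ρ * msqrt σ)

/-- Purified distance. -/
def purifiedDist (ρ σ : Matrix n n ℂ) : ℝ := Real.sqrt (1 - (fidelity ρ σ) ^ 2)

/-- A density matrix. -/
def IsState (ρ : Matrix n n ℂ) : Prop := ρ.PosSemidef ∧ ρ.trace = 1

/-- Max-relative entropy (base 2). -/
def Dmax (ρ σ : Matrix n n ℂ) : ℝ := sInf {l : ℝ | ((2 : ℝ) ^ l • σ - ρ).PosSemidef}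

/-- Smooth max-relative entropy. -/
def DmaxSmooth (ε : ℝ) (ρ σ : Matrix n n ℂ) : ℝ :=
  sInf {x : ℝ | ∃ ρ' : Matrix n n ℂ, IsState ρ' ∧ purifiedDist ρ' ρ ≤ ε ∧ x = Dmax ρ' σ}

/-- Umegaki relative entropy, in bits. -/
def relEnt (ρ σ : Matrix n n ℂ) : ℝ := ((ρ * (mlog ρ - mlog σ)).trace).re / Real.log 2

/-- Partial trace over the second factor. -/
def ptraceRight {α β : Type*} [Fintype β] (M : Matrix (α × β) (α × β) ℂ) : Matrix α α ℂ :=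
  Matrix.of fun i j => ∑ b, M (i, b) (j, b)

/-- Partial trace over the first factor. -/
def ptraceLeft {α β : Type*} [Fintype α] (M : Matrix (α × β) (α × β) ℂ) : Matrix β β ℂ :=
  Matrix.of fun i j => ∑ a, M (a, i) (a, j)

end QIT

open QIT

theorem Matrix.posSemidef_iff_eq_transpose_mul_self {n : Type*} [Fintype n] [DecidableEq n]
    {A : Matrix n n ℂ} : A.PosSemidef ↔ ∃ B : Matrix n n ℂ, A = Bᴴ * B := by
  open scoped MatrixOrder in
  constructor
  · intro h
    obtain ⟨B, hB⟩ := CStarAlgebra.nonneg_iff_eq_star_mul_self.mp h.nonneg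
    exact ⟨B, hB⟩
  · rintro ⟨B, rfl⟩
    exact posSemidef_conjTranspose_mul_self B

section Scalar
open MeasureTheory Set Filter Topology

lemma cont_of_finite {s : Set ℝ} (hs : s.Finite) (f : ℝ → ℝ) : ContinuousOn f s := by
  rw [continuousOn_iff_continuous_restrict]
  have : Finite s := hs.to_subtype
  exact continuous_of_discreteTopology

lemma log_integral {γ : ℝ} (hγ : 0 < γ) :
    IntegrableOn (fun s => 1/(1+s) - 1/(γ+s)) (Ioi (0:ℝ)) ∧
    ∫ s in Ioi (0:ℝ), (1/(1+s) - 1/(γ+s)) = Real.log γ := by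
  set F : ℝ → ℝ := fun s => Real.log (1+s) - Real.log (γ+s) with hF
  have hderiv : ∀ x ∈ Ici (0:ℝ), HasDerivAt F (1/(1+x) - 1/(γ+x)) x := by
    intro x hx
    have h1 : (0:ℝ) < 1 + x := by linarith [hx.out]
    have h2 : (0:ℝ) < γ + x := by linarith [hx.out]
    have d1 : HasDerivAt (fun s : ℝ => Real.log (1+s)) (1/(1+x)) x := by
      simpa [Function.comp_def] using (Real.hasDerivAt_log h1.ne').comp x ((hasDerivAt_id x).const_add 1)
    have d2 : HasDerivAt (fun s : ℝ => Real.log (γ+s)) (1/(γ+x)) x := by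
      simpa [Function.comp_def] using (Real.hasDerivAt_log h2.ne').comp x ((hasDerivAt_id x).const_add γ)
    simpa [one_div, hF, Pi.sub_def] using d1.sub d2
  have hlim : Tendsto F atTop (𝓝 0) := by
    have h1 : Tendsto (fun s : ℝ => (1-γ)/(γ+s)) atTop (𝓝 0) :=
      tendsto_const_nhds.div_atTop (tendsto_atTop_add_const_left _ _ tendsto_id)
    have h2 : Tendsto (fun s : ℝ => Real.log (1 + (1-γ)/(γ+s))) atTop (𝓝 0) := by
      have := (Real.continuousAt_log (x := 1) one_ne_zero).tendsto
      simpa [Function.comp_def] using this.comp (by simpa using (tendsto_const_nhds.add h1))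
    refine h2.congr' ?_
    filter_upwards [eventually_gt_atTop (0:ℝ)] with s hs
    have h2' : (0:ℝ) < γ + s := by linarith
    have h1' : (0:ℝ) < 1 + s := by linarith
    rw [hF]
    have : 1 + (1-γ)/(γ+s) = (1+s)/(γ+s) := by field_simp; ring
    rw [this, Real.log_div h1'.ne' h2'.ne']
  have hcont : ContinuousWithinAt F (Ici (0:ℝ)) 0 := (hderiv 0 (by simp)).continuousAt.continuousWithinAt
  have hF0 : F 0 = - Real.log γ := by simp [hF]
  rcases le_or_gt 1 γ with hγ1 | hγ1
  · have hpos : ∀ x ∈ Ioi (0:ℝ), 0 ≤ 1/(1+x) - 1/(γ+x) := by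
      intro x hx
      have h1 : (0:ℝ) < 1 + x := by linarith [hx.out]
      have : 1 + x ≤ γ + x := by linarith
      have := one_div_le_one_div_of_le h1 this
      linarith
    refine ⟨integrableOn_Ioi_deriv_of_nonneg hcont (fun x hx => hderiv x (mem_Ici.mpr (le_of_lt hx))) hpos hlim, ?_⟩
    rw [integral_Ioi_of_hasDerivAt_of_nonneg hcont (fun x hx => hderiv x (mem_Ici.mpr (le_of_lt hx))) hpos hlim, hF0]
    ring
  · have hpos : ∀ x ∈ Ioi (0:ℝ), 1/(1+x) - 1/(γ+x) ≤ 0 := by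
      intro x hx
      have h2 : (0:ℝ) < γ + x := by linarith [hx.out]
      have : γ + x ≤ 1 + x := by linarith
      have := one_div_le_one_div_of_le h2 this
      linarith
    refine ⟨integrableOn_Ioi_deriv_of_nonpos hcont (fun x hx => hderiv x (mem_Ici.mpr (le_of_lt hx))) hpos hlim, ?_⟩
    rw [integral_Ioi_of_hasDerivAt_of_nonpos hcont (fun x hx => hderiv x (mem_Ici.mpr (le_of_lt hx))) hpos hlim, hF0]
    ring


lemma expand_sum {α : Type*} [Fintype α] (s : ℝ) (c : α → ℝ) (Z : α → ℝ) :
    ∑ a, Z a * (1/(1+s) - 1/(c a+s)) = (∑ a, Z a) * (1/(1+s)) - ∑ a, Z a / (c a + s) := by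
  rw [Finset.sum_mul, ← Finset.sum_sub_distrib]
  exact Finset.sum_congr rfl (fun a _ => by rw [mul_sub, mul_one_div, mul_one_div])

/-- Core scalar inequality: weighted log sums compare when weighted resolvent sums do. -/
lemma weighted_log_le {ι κ : Type*} [Fintype ι] [Fintype κ]
    (γ : ι → ℝ) (δ : κ → ℝ) (W : ι → ℝ) (V : κ → ℝ)
    (hγ : ∀ i, 0 < γ i) (hδ : ∀ j, 0 < δ j)
    (hsum : ∑ i, W i = ∑ j, V j)
    (hres : ∀ s : ℝ, 0 < s → ∑ j, V j / (δ j + s) ≤ ∑ i, W i / (γ i + s)) :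
    ∑ i, Real.log (γ i) * W i ≤ ∑ j, Real.log (δ j) * V j := by
  simp_rw [mul_comm (Real.log _)]
  have intW : ∀ i : ι, IntegrableOn (fun s => W i * (1/(1+s) - 1/(γ i+s))) (Ioi (0:ℝ)) :=
    fun i => ((log_integral (hγ i)).1.smul (W i)).congr (by filter_upwards with s; simp [smul_eq_mul])
  have intV : ∀ j : κ, IntegrableOn (fun s => V j * (1/(1+s) - 1/(δ j+s))) (Ioi (0:ℝ)) :=
    fun j => ((log_integral (hδ j)).1.smul (V j)).congr (by filter_upwards with s; simp [smul_eq_mul])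
  have intSW : IntegrableOn (fun s => ∑ i, W i * (1/(1+s) - 1/(γ i+s))) (Ioi (0:ℝ)) :=
    integrable_finset_sum _ (fun i _ => intW i)
  have intSV : IntegrableOn (fun s => ∑ j, V j * (1/(1+s) - 1/(δ j+s))) (Ioi (0:ℝ)) :=
    integrable_finset_sum _ (fun j _ => intV j)
  have eqW : ∫ s in Ioi (0:ℝ), (∑ i, W i * (1/(1+s) - 1/(γ i+s))) = ∑ i, W i * Real.log (γ i) := by
    rw [integral_finset_sum _ (fun i _ => intW i)]
    refine Finset.sum_congr rfl (fun i _ => ?_)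
    rw [integral_const_mul, (log_integral (hγ i)).2]
  have eqV : ∫ s in Ioi (0:ℝ), (∑ j, V j * (1/(1+s) - 1/(δ j+s))) = ∑ j, V j * Real.log (δ j) := by
    rw [integral_finset_sum _ (fun j _ => intV j)]
    refine Finset.sum_congr rfl (fun j _ => ?_)
    rw [integral_const_mul, (log_integral (hδ j)).2]
  rw [← eqW, ← eqV]
  refine setIntegral_mono_on intSW intSV measurableSet_Ioi (fun s hs => ?_)
  have hs' : (0:ℝ) < s := hs
  have e1 := expand_sum s γ W
  have e2 := expand_sum s δ V
  rw [e1, e2, hsum]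
  have := hres s hs'
  linarith

end Scalar

namespace QITAux
open QIT

variable {m : Type*} [Fintype m] [DecidableEq m]

lemma star_mulVec_dot (M : Matrix m m ℂ) (x y : m → ℂ) :
    star (M *ᵥ x) ⬝ᵥ y = star x ⬝ᵥ (Mᴴ *ᵥ y) := by
  rw [star_mulVec, dotProduct_mulVec]

lemma conj_quad {M : Matrix m m ℂ} (hM : M.IsHermitian) (x : m → ℂ) :
    (starRingEnd ℂ) (star x ⬝ᵥ M *ᵥ x) = star x ⬝ᵥ M *ᵥ x := by
  have h1 : star x ⬝ᵥ M *ᵥ x = star (star (M *ᵥ x) ⬝ᵥ x) := star_dotProduct x (M *ᵥ x)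
  calc (starRingEnd ℂ) (star x ⬝ᵥ M *ᵥ x) = star (M *ᵥ x) ⬝ᵥ x := by
        rw [starRingEnd_apply, h1, star_star]
    _ = star x ⬝ᵥ (Mᴴ *ᵥ x) := star_mulVec_dot M x x
    _ = star x ⬝ᵥ M *ᵥ x := by rw [hM]

lemma posSemidef_of_re (M : Matrix m m ℂ) (hM : M.IsHermitian)
    (h : ∀ x : m → ℂ, 0 ≤ (star x ⬝ᵥ M *ᵥ x).re) : M.PosSemidef := by
  refine PosSemidef.of_dotProduct_mulVec_nonneg hM (fun x => ?_)
  have him := conj_quad hM x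
  rw [Complex.conj_eq_iff_im] at him
  rw [Complex.le_def]
  simp [him, h x]

lemma psd_diag_nonneg {M : Matrix m m ℂ} (hM : M.PosSemidef) (i : m) : 0 ≤ M i i := by
  have := hM.dotProduct_mulVec_nonneg (Pi.single i 1)
  simpa [dotProduct, mulVec_single, Pi.single_apply, apply_ite (starRingEnd ℂ), ite_mul] using this

lemma diag_entry_eq (X : Matrix m m ℂ) (i : m) :
    X i i = star (Pi.single i 1) ⬝ᵥ (X *ᵥ Pi.single i 1) := by
  simp [dotProduct, mulVec_single, Pi.single_apply, apply_ite (starRingEnd ℂ), ite_mul]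

lemma psd_trace_nonneg {M : Matrix m m ℂ} (hM : M.PosSemidef) : 0 ≤ M.trace :=
  Finset.sum_nonneg (fun i _ => psd_diag_nonneg hM i)

lemma trace_pairing_nonneg {ρ M : Matrix m m ℂ} (hρ : ρ.PosSemidef) (hM : M.PosSemidef) :
    0 ≤ (ρ * M).trace := by
  obtain ⟨B, rfl⟩ := posSemidef_iff_eq_transpose_mul_self.mp hM
  rw [← mul_assoc, trace_mul_comm, ← mul_assoc]
  exact psd_trace_nonneg (hρ.mul_mul_conjTranspose_same B)


section Spectral
variable {A : Matrix m m ℂ}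

lemma cont_of_finite {s : Set ℝ} (hs : s.Finite) (f : ℝ → ℝ) : ContinuousOn f s := by
  rw [continuousOn_iff_continuous_restrict]
  have : Finite s := hs.to_subtype
  exact continuous_of_discreteTopology

lemma contOn (f : ℝ → ℝ) (A : Matrix m m ℂ) : ContinuousOn f (spectrum ℝ A) :=
  cont_of_finite (Matrix.finite_real_spectrum (A := A)) f

lemma contOn' (f g : ℝ → ℝ) (A : Matrix m m ℂ) : ContinuousOn g (f '' (spectrum ℝ A)) :=
  cont_of_finite ((Matrix.finite_real_spectrum (A := A)).image f) g

/-- unfolded form of `hcfc` -/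
lemma hcfc_eq (hA : A.IsHermitian) (f : ℝ → ℝ) :
    hcfc A f = (hA.eigenvectorUnitary : Matrix m m ℂ) *
      Matrix.diagonal ((↑) ∘ f ∘ hA.eigenvalues) *
      star (hA.eigenvectorUnitary : Matrix m m ℂ) := by
  rw [hcfc, dif_pos hA]

/-- `hcfc` agrees with the Mathlib continuous functional calculus. -/
lemma hcfc_eq_cfc (hA : A.IsHermitian) (f : ℝ → ℝ) : hcfc A f = cfc f A := by
  rw [hcfc_eq hA, hA.cfc_eq, Matrix.IsHermitian.cfc]
  rfl

lemma star_mul_self_U (hA : A.IsHermitian) :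
    star (hA.eigenvectorUnitary : Matrix m m ℂ) * (hA.eigenvectorUnitary : Matrix m m ℂ) = 1 :=
  Unitary.coe_star_mul_self hA.eigenvectorUnitary

lemma mul_star_self_U (hA : A.IsHermitian) :
    (hA.eigenvectorUnitary : Matrix m m ℂ) * star (hA.eigenvectorUnitary : Matrix m m ℂ) = 1 :=
  Unitary.coe_mul_star_self hA.eigenvectorUnitary

lemma isSelfAdjoint_of_isHermitian (hA : A.IsHermitian) : IsSelfAdjoint A := hA

lemma hcfc_isHermitian (hA : A.IsHermitian) (f : ℝ → ℝ) : (hcfc A f).IsHermitian := by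
  rw [hcfc_eq_cfc hA f]
  have : IsSelfAdjoint A := hA
  exact cfc_predicate f A

lemma hcfc_mul (hA : A.IsHermitian) (f g : ℝ → ℝ) :
    hcfc A f * hcfc A g = hcfc A (fun t => f t * g t) := by
  rw [hcfc_eq_cfc hA, hcfc_eq_cfc hA, hcfc_eq_cfc hA]
  exact (cfc_mul f g A (contOn f A) (contOn g A)).symm

lemma hcfc_eq_one (hA : A.IsHermitian) {f : ℝ → ℝ}
    (h : ∀ i, f (hA.eigenvalues i) = 1) : hcfc A f = 1 := by
  rw [hcfc_eq_cfc hA]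
  have h2 : ∀ x ∈ spectrum ℝ A, f x = (fun _ => (1:ℝ)) x := by
    intro x hx
    rw [hA.spectrum_real_eq_range_eigenvalues] at hx
    obtain ⟨i, rfl⟩ := hx
    exact h i
  rw [cfc_congr h2]
  have : IsSelfAdjoint A := hA
  exact cfc_one ℝ A

lemma hcfc_shift (hA : A.IsHermitian) (ε : ℝ) : hcfc A (fun t => t + ε) = A + ε • 1 := by
  have hsa : IsSelfAdjoint A := hA
  rw [hcfc_eq_cfc hA]
  rw [cfc_add A (fun t : ℝ => t) (fun _ : ℝ => ε) (contOn _ A) (contOn _ A)]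
  rw [cfc_id' ℝ A, cfc_const ε A hsa, Algebra.algebraMap_eq_smul_one]

lemma hcfc_smulc (hA : A.IsHermitian) (c : ℝ) : hcfc A (fun t => c * t) = c • A := by
  have hsa : IsSelfAdjoint A := hA
  rw [hcfc_eq_cfc hA]
  exact cfc_const_mul_id c A

lemma hcfc_comp_shift (hA : A.IsHermitian) (ε : ℝ) (g : ℝ → ℝ) :
    hcfc (A + ε • 1) g = hcfc A (fun t => g (t + ε)) := by
  have hsa : IsSelfAdjoint A := hA
  have hherm : (A + ε • 1 : Matrix m m ℂ).IsHermitian := by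
    have := hcfc_isHermitian hA (fun t => t + ε)
    rwa [hcfc_shift hA ε] at this
  rw [hcfc_eq_cfc hherm, hcfc_eq_cfc hA, ← hcfc_shift hA ε, hcfc_eq_cfc hA]
  exact (cfc_comp' g (fun t => t + ε) A (contOn' _ _ _) (contOn _ _)).symm

lemma hcfc_comp_smulc (hA : A.IsHermitian) (c : ℝ) (g : ℝ → ℝ) :
    hcfc (c • A) g = hcfc A (fun t => g (c * t)) := by
  have hsa : IsSelfAdjoint A := hA
  have hherm : (c • A : Matrix m m ℂ).IsHermitian := by
    have := hcfc_isHermitian hA (fun t => c * t)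
    rwa [hcfc_smulc hA c] at this
  rw [hcfc_eq_cfc hherm, hcfc_eq_cfc hA, ← hcfc_smulc hA c, hcfc_eq_cfc hA]
  exact (cfc_comp' g (fun t => c * t) A (contOn' _ _ _) (contOn _ _)).symm

end Spectral

section Weights
variable {A ρ : Matrix m m ℂ}

lemma smul_one_diag (ε : ℝ) : (ε • 1 : Matrix m m ℂ) = Matrix.diagonal (fun _ => (ε : ℂ)) := by
  ext i j
  by_cases h : i = j <;> simp [h, Matrix.smul_apply, Matrix.one_apply, Complex.real_smul]

lemma posDef_smul_one {ε : ℝ} (hε : 0 < ε) : ((ε • 1 : Matrix m m ℂ)).PosDef := by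
  rw [smul_one_diag, Matrix.posDef_diagonal_iff]
  intro i
  exact_mod_cast hε

lemma posDef_add_smul_one (hA : A.PosSemidef) {ε : ℝ} (hε : 0 < ε) :
    (A + ε • 1).PosDef :=
  Matrix.PosDef.posSemidef_add hA (posDef_smul_one hε)

/-- weight of `ρ` on the `i`-th eigenvector of `A`. -/
noncomputable def wt (hA : A.IsHermitian) (ρ : Matrix m m ℂ) (i : m) : ℝ :=
  ((star (hA.eigenvectorUnitary : Matrix m m ℂ) * ρ * (hA.eigenvectorUnitary : Matrix m m ℂ))
    i i).re

lemma wt_nonneg (hA : A.IsHermitian) (hρ : ρ.PosSemidef) (i : m) : 0 ≤ wt hA ρ i := by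
  have hpsd : (star (hA.eigenvectorUnitary : Matrix m m ℂ) * ρ *
      (hA.eigenvectorUnitary : Matrix m m ℂ)).PosSemidef := by
    rw [star_eq_conjTranspose]
    exact hρ.conjTranspose_mul_mul_same _
  have := psd_diag_nonneg hpsd i
  rw [Complex.le_def] at this
  exact this.1

lemma wt_sum (hA : A.IsHermitian) (ρ : Matrix m m ℂ) : ∑ i, wt hA ρ i = ρ.trace.re := by
  have h1 : ∑ i, wt hA ρ i = ((star (hA.eigenvectorUnitary : Matrix m m ℂ) * ρ *
      (hA.eigenvectorUnitary : Matrix m m ℂ)).trace).re := by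
    rw [Matrix.trace, Complex.re_sum]
    rfl
  rw [h1, Matrix.trace_mul_cycle, mul_star_self_U hA, one_mul]

lemma trace_hcfc (hA : A.IsHermitian) (ρ : Matrix m m ℂ) (f : ℝ → ℝ) :
    ((ρ * hcfc A f).trace).re = ∑ i, f (hA.eigenvalues i) * wt hA ρ i := by
  rw [hcfc_eq hA]
  have h1 : ρ * ((hA.eigenvectorUnitary : Matrix m m ℂ) *
      Matrix.diagonal ((↑) ∘ f ∘ hA.eigenvalues) * star (hA.eigenvectorUnitary : Matrix m m ℂ))
      = (ρ * (hA.eigenvectorUnitary : Matrix m m ℂ)) *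
        Matrix.diagonal ((↑) ∘ f ∘ hA.eigenvalues) * star (hA.eigenvectorUnitary : Matrix m m ℂ) := by
    simp only [mul_assoc]
  rw [h1, Matrix.trace_mul_cycle]
  have h2 : star (hA.eigenvectorUnitary : Matrix m m ℂ) *
      (ρ * (hA.eigenvectorUnitary : Matrix m m ℂ)) = star (hA.eigenvectorUnitary : Matrix m m ℂ) *
      ρ * (hA.eigenvectorUnitary : Matrix m m ℂ) := by
    simp only [mul_assoc]
  rw [h2]
  set X := star (hA.eigenvectorUnitary : Matrix m m ℂ) * ρ *
    (hA.eigenvectorUnitary : Matrix m m ℂ) with hX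
  rw [Matrix.trace, Complex.re_sum]
  refine Finset.sum_congr rfl (fun i _ => ?_)
  rw [Matrix.diag_apply, Matrix.mul_diagonal]
  have : ((↑) ∘ f ∘ hA.eigenvalues) i = ((f (hA.eigenvalues i) : ℝ) : ℂ) := rfl
  rw [this, mul_comm, Complex.re_ofReal_mul]
  rfl

lemma wt_support (hA : A.IsHermitian) (hker : ∀ x, A *ᵥ x = 0 → ρ *ᵥ x = 0)
    {i : m} (hi : hA.eigenvalues i = 0) : wt hA ρ i = 0 := by
  have hv : A *ᵥ ⇑(hA.eigenvectorBasis i) = 0 := by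
    rw [hA.mulVec_eigenvectorBasis, hi]
    ext j; simp
  have hρv : ρ *ᵥ ⇑(hA.eigenvectorBasis i) = 0 := hker _ hv
  have hcol : (hA.eigenvectorUnitary : Matrix m m ℂ) *ᵥ Pi.single i 1
      = ⇑(hA.eigenvectorBasis i) := hA.eigenvectorUnitary_mulVec i
  have hXv : (star (hA.eigenvectorUnitary : Matrix m m ℂ) * ρ *
      (hA.eigenvectorUnitary : Matrix m m ℂ)) *ᵥ Pi.single i 1 = 0 := by
    rw [← Matrix.mulVec_mulVec, hcol, ← Matrix.mulVec_mulVec, hρv, Matrix.mulVec_zero]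
  have hdiag := diag_entry_eq (star (hA.eigenvectorUnitary : Matrix m m ℂ) * ρ *
      (hA.eigenvectorUnitary : Matrix m m ℂ)) i
  rw [wt, hdiag, hXv, dotProduct_zero]
  rfl

end Weights

section Antitone
variable {C D : Matrix m m ℂ}

lemma inv_antitone (hC : C.PosDef) (hD : D.PosDef) (hle : (D - C).PosSemidef) :
    (C⁻¹ - D⁻¹).PosSemidef := by
  have hCdet : IsUnit C.det := isUnit_iff_ne_zero.mpr hC.det_pos.ne'
  have hDdet : IsUnit D.det := isUnit_iff_ne_zero.mpr hD.det_pos.ne'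
  have hCi : (C⁻¹ : Matrix m m ℂ).IsHermitian := hC.inv.isHermitian
  have hDi : (D⁻¹ : Matrix m m ℂ).IsHermitian := hD.inv.isHermitian
  refine posSemidef_of_re _ (hCi.sub hDi) (fun x => ?_)
  set u := D⁻¹ *ᵥ x with hu
  set w := C⁻¹ *ᵥ x with hw
  -- basic identities
  have hCC : C * C⁻¹ = 1 := Matrix.mul_nonsing_inv C hCdet
  have hCC' : C⁻¹ * C = 1 := Matrix.nonsing_inv_mul C hCdet
  have hDD' : D⁻¹ * D = 1 := Matrix.nonsing_inv_mul D hDdet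
  have key1 : ∀ y : m → ℂ, star u ⬝ᵥ y = star x ⬝ᵥ (D⁻¹ *ᵥ y) := by
    intro y
    rw [hu, star_mulVec_dot, hDi]
  have key1' : ∀ y : m → ℂ, star w ⬝ᵥ y = star x ⬝ᵥ (C⁻¹ *ᵥ y) := by
    intro y
    rw [hw, star_mulVec_dot, hCi]
  have e1 : star u ⬝ᵥ (D *ᵥ u) = star x ⬝ᵥ (D⁻¹ *ᵥ x) := by
    rw [key1, Matrix.mulVec_mulVec, hDD', Matrix.one_mulVec]
  have e2 : star u ⬝ᵥ x = star x ⬝ᵥ (D⁻¹ *ᵥ x) := by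
    rw [key1]
  have e3 : star u ⬝ᵥ (C *ᵥ w) = star u ⬝ᵥ x := by
    rw [hw, Matrix.mulVec_mulVec, hCC, Matrix.one_mulVec]
  have e4 : star w ⬝ᵥ (C *ᵥ u) = star x ⬝ᵥ u := by
    rw [key1', Matrix.mulVec_mulVec, hCC', Matrix.one_mulVec]
  have e5 : star w ⬝ᵥ (C *ᵥ w) = star x ⬝ᵥ (C⁻¹ *ᵥ x) := by
    rw [key1', Matrix.mulVec_mulVec, hCC', Matrix.one_mulVec]
  have e6 : star x ⬝ᵥ u = star x ⬝ᵥ (D⁻¹ *ᵥ x) := by rw [hu]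
  -- expansion of the square
  have expand : star (u - w) ⬝ᵥ (C *ᵥ (u - w)) =
      star u ⬝ᵥ (C *ᵥ u) - star u ⬝ᵥ x - star x ⬝ᵥ (D⁻¹ *ᵥ x) + star x ⬝ᵥ (C⁻¹ *ᵥ x) := by
    rw [Matrix.mulVec_sub, star_sub, sub_dotProduct, dotProduct_sub, dotProduct_sub,
      e3, e4, e5, e6]
    ring
  -- positivity facts
  have p1 : 0 ≤ (star (u - w) ⬝ᵥ (C *ᵥ (u - w))).re := by
    have := hC.posSemidef.dotProduct_mulVec_nonneg (u - w)
    rw [Complex.le_def] at this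
    exact this.1
  have p2 : (star u ⬝ᵥ (C *ᵥ u)).re ≤ (star u ⬝ᵥ (D *ᵥ u)).re := by
    have := hle.dotProduct_mulVec_nonneg u
    rw [Matrix.sub_mulVec, dotProduct_sub, Complex.le_def] at this
    have h := this.1
    rw [Complex.sub_re] at h
    simp only [Complex.zero_re] at h
    linarith
  -- assemble
  have goal_eq : (star x ⬝ᵥ ((C⁻¹ - D⁻¹) *ᵥ x)).re =
      (star x ⬝ᵥ (C⁻¹ *ᵥ x)).re - (star x ⬝ᵥ (D⁻¹ *ᵥ x)).re := by
    rw [Matrix.sub_mulVec, dotProduct_sub, Complex.sub_re]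
  rw [goal_eq]
  have hre := congrArg Complex.re expand
  rw [Complex.add_re, Complex.sub_re, Complex.sub_re] at hre
  have he1 := congrArg Complex.re e1
  have he2 := congrArg Complex.re e2
  linarith

end Antitone

section KeyMono
variable {C D ρ : Matrix m m ℂ}

lemma hcfc_resolvent (hC : C.PosDef) {s : ℝ} (hs : 0 < s) :
    hcfc C (fun t => (t + s)⁻¹) = (C + s • 1)⁻¹ := by
  have hCh := hC.isHermitian
  have h1 : hcfc C (fun t => (t + s)⁻¹) * (C + s • 1) = 1 := by
    rw [← hcfc_shift hCh s, hcfc_mul hCh]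
    apply hcfc_eq_one hCh
    intro i
    have hpos : 0 < hCh.eigenvalues i + s := add_pos (hC.eigenvalues_pos i) hs
    exact inv_mul_cancel₀ hpos.ne'
  exact (Matrix.inv_eq_left_inv h1).symm

lemma key_mono (hC : C.PosDef) (hD : D.PosDef) (hρ : ρ.PosSemidef)
    (hle : (D - C).PosSemidef) :
    ((ρ * hcfc C Real.log).trace).re ≤ ((ρ * hcfc D Real.log).trace).re := by
  have hCh := hC.isHermitian
  have hDh := hD.isHermitian
  rw [trace_hcfc hCh, trace_hcfc hDh]
  refine weighted_log_le hCh.eigenvalues hDh.eigenvalues (wt hCh ρ) (wt hDh ρ)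
    (fun i => hC.eigenvalues_pos i) (fun j => hD.eigenvalues_pos j)
    (by rw [wt_sum hCh ρ, wt_sum hDh ρ]) (fun s hs => ?_)
  -- resolvent comparison
  have hCs : (C + s • 1).PosDef := posDef_add_smul_one hC.posSemidef hs
  have hDs : (D + s • 1).PosDef := posDef_add_smul_one hD.posSemidef hs
  have hsub : (D + s • 1) - (C + s • 1) = D - C := by abel
  have hanti : ((C + s • 1)⁻¹ - (D + s • 1)⁻¹).PosSemidef :=
    inv_antitone hCs hDs (by rw [hsub]; exact hle)
  have hpair : 0 ≤ (ρ * ((C + s • 1)⁻¹ - (D + s • 1)⁻¹)).trace.re := by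
    have := trace_pairing_nonneg hρ hanti
    rw [Complex.le_def] at this
    exact this.1
  rw [Matrix.mul_sub, Matrix.trace_sub, Complex.sub_re] at hpair
  have hCres : ((ρ * (C + s • 1)⁻¹).trace).re = ∑ i, wt hCh ρ i / (hCh.eigenvalues i + s) := by
    rw [← hcfc_resolvent hC hs, trace_hcfc hCh]
    exact Finset.sum_congr rfl (fun i _ => by rw [div_eq_mul_inv, mul_comm])
  have hDres : ((ρ * (D + s • 1)⁻¹).trace).re = ∑ j, wt hDh ρ j / (hDh.eigenvalues j + s) := by
    rw [← hcfc_resolvent hD hs, trace_hcfc hDh]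
    exact Finset.sum_congr rfl (fun j _ => by rw [div_eq_mul_inv, mul_comm])
  rw [hCres, hDres] at hpair
  linarith

end KeyMono

section MainIneq
open Filter Topology

variable {A B S ρ : Matrix m m ℂ}

lemma tendsto_logsum {ι : Type*} [Fintype ι] (γ : ι → ℝ) (W : ι → ℝ)
    (hγ : ∀ i, 0 ≤ γ i) (hW0 : ∀ i, γ i = 0 → W i = 0) :
    Tendsto (fun ε => ∑ i, Real.log (γ i + ε) * W i) (𝓝[>] (0:ℝ))
      (𝓝 (∑ i, Real.log (γ i) * W i)) := by
  apply tendsto_finset_sum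
  intro i _
  rcases eq_or_lt_of_le (hγ i) with h | h
  · have hw := hW0 i h.symm
    rw [hw]
    simp only [mul_zero]
    exact tendsto_const_nhds
  · have hcont : ContinuousAt (fun ε : ℝ => Real.log (γ i + ε) * W i) 0 := by
      apply ContinuousAt.mul _ continuousAt_const
      apply (Real.continuousAt_log (by simpa using h.ne')).comp
      exact (continuousAt_const.add continuousAt_id)
    have := hcont.tendsto
    rw [add_zero (γ i)] at this
    exact this.mono_left nhdsWithin_le_nhds

lemma ker_le_of_le (hA : A.PosSemidef) (hle : (B - A).PosSemidef)
    {x : m → ℂ} (hx : B *ᵥ x = 0) : A *ᵥ x = 0 := by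
  have h1 : star x ⬝ᵥ B *ᵥ x = 0 := by rw [hx, dotProduct_zero]
  have h2 := hle.dotProduct_mulVec_nonneg x
  rw [Matrix.sub_mulVec, dotProduct_sub, h1, zero_sub, le_neg] at h2
  have h3 := hA.dotProduct_mulVec_nonneg x
  have h4 : star x ⬝ᵥ A *ᵥ x = 0 := le_antisymm (by simpa using h2) h3
  exact (hA.dotProduct_mulVec_zero_iff x).mp h4

lemma main_ineq (hA : A.PosSemidef) (hB : B.PosSemidef) (hρ : ρ.PosSemidef)
    (hle : (B - A).PosSemidef) (hker : ∀ x, A *ᵥ x = 0 → ρ *ᵥ x = 0) :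
    ((ρ * mlog A).trace).re ≤ ((ρ * mlog B).trace).re := by
  have hAh := hA.isHermitian
  have hBh := hB.isHermitian
  have hkerB : ∀ x, B *ᵥ x = 0 → ρ *ᵥ x = 0 := fun x hx => hker x (ker_le_of_le hA hle hx)
  rw [mlog, mlog, trace_hcfc hAh, trace_hcfc hBh]
  have step : ∀ ε : ℝ, ε ∈ Set.Ioi (0:ℝ) →
      ∑ i, Real.log (hAh.eigenvalues i + ε) * wt hAh ρ i ≤
      ∑ j, Real.log (hBh.eigenvalues j + ε) * wt hBh ρ j := by
    intro ε hε
    have hε' : (0:ℝ) < ε := hε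
    have hCpd := posDef_add_smul_one hA hε'
    have hDpd := posDef_add_smul_one hB hε'
    have hsub : (B + ε • 1) - (A + ε • 1) = B - A := by abel
    have hm := key_mono hCpd hDpd hρ (by rw [hsub]; exact hle)
    rw [hcfc_comp_shift hAh ε Real.log, hcfc_comp_shift hBh ε Real.log,
      trace_hcfc hAh, trace_hcfc hBh] at hm
    exact hm
  have tA := tendsto_logsum hAh.eigenvalues (wt hAh ρ) (fun i => hA.eigenvalues_nonneg i)
    (fun i hi => wt_support hAh hker hi)
  have tB := tendsto_logsum hBh.eigenvalues (wt hBh ρ) (fun j => hB.eigenvalues_nonneg j)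
    (fun j hj => wt_support hBh hkerB hj)
  exact le_of_tendsto_of_tendsto tA tB (eventually_mem_nhdsWithin.mono step)

lemma trace_mlog_smul (hS : S.PosSemidef) (hρ : ρ.PosSemidef) {c : ℝ} (hc : 0 < c)
    (hker : ∀ x, S *ᵥ x = 0 → ρ *ᵥ x = 0) :
    ((ρ * mlog (c • S)).trace).re = ((ρ * mlog S).trace).re + Real.log c * ρ.trace.re := by
  have hSh := hS.isHermitian
  rw [mlog, mlog, hcfc_comp_smulc hSh c Real.log, trace_hcfc hSh, trace_hcfc hSh,
    ← wt_sum hSh ρ, Finset.mul_sum, ← Finset.sum_add_distrib]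
  refine Finset.sum_congr rfl (fun i _ => ?_)
  rcases eq_or_lt_of_le (hS.eigenvalues_nonneg i) with h | h
  · have hw := wt_support hSh hker h.symm
    rw [hw, mul_zero, mul_zero, mul_zero, add_zero]
  · rw [Real.log_mul hc.ne' h.ne', add_mul]
    ring

end MainIneq

section Assembly

lemma smul_psd {M : Matrix m m ℂ} (hM : M.PosSemidef) {c : ℝ} (hc : 0 ≤ c) :
    (c • M).PosSemidef := by
  refine PosSemidef.of_dotProduct_mulVec_nonneg ?_ ?_
  · have h := hM.1
    unfold Matrix.IsHermitian
    ext i j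
    have hij : star (M j i) = M i j := congrFun (congrFun h i) j
    simp [Matrix.conjTranspose_apply, Matrix.smul_apply, star_smul, hij]
  · intro x
    rw [Matrix.smul_mulVec, dotProduct_smul, Complex.real_smul]
    exact mul_nonneg (by exact_mod_cast hc) (hM.dotProduct_mulVec_nonneg x)

lemma kron_conjTranspose {α β : Type*} (M : Matrix α α ℂ) (N : Matrix β β ℂ) :
    (M ⊗ₖ N)ᴴ = Mᴴ ⊗ₖ Nᴴ := by
  ext ⟨i, j⟩ ⟨k, l⟩
  simp [Matrix.conjTranspose_apply, mul_comm]

lemma kron_psd {α β : Type*} [Fintype α] [Fintype β] {M : Matrix α α ℂ} {N : Matrix β β ℂ}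
    (hM : M.PosSemidef) (hN : N.PosSemidef) : (M ⊗ₖ N).PosSemidef := by
  classical
  obtain ⟨B, rfl⟩ := Matrix.posSemidef_iff_eq_transpose_mul_self.mp hM
  obtain ⟨C, rfl⟩ := Matrix.posSemidef_iff_eq_transpose_mul_self.mp hN
  rw [Matrix.mul_kronecker_mul, ← kron_conjTranspose]
  exact Matrix.posSemidef_conjTranspose_mul_self _

lemma ptraceRight_psd {α β : Type*} [Fintype α] [DecidableEq α] [Fintype β] [DecidableEq β]
    {M : Matrix (α × β) (α × β) ℂ} (hM : M.PosSemidef) : (ptraceRight M).PosSemidef := by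
  refine PosSemidef.of_dotProduct_mulVec_nonneg ?_ ?_
  · unfold Matrix.IsHermitian
    ext i j
    have h := fun p q => congrFun (congrFun hM.1 p) q
    simp only [Matrix.conjTranspose_apply, ptraceRight, Matrix.of_apply, star_sum]
    exact Finset.sum_congr rfl (fun b _ => h (i, b) (j, b))
  · intro y
    have key : star y ⬝ᵥ (ptraceRight M) *ᵥ y =
        ∑ b, star (fun p : α × β => if p.2 = b then y p.1 else 0) ⬝ᵥ
          M *ᵥ (fun p : α × β => if p.2 = b then y p.1 else 0) := by
      simp only [dotProduct, Matrix.mulVec, ptraceRight, Matrix.of_apply, Pi.star_apply,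
        Fintype.sum_prod_type, mul_ite, mul_zero, ite_mul, zero_mul, apply_ite (star : ℂ → ℂ),
        star_zero, Finset.sum_ite_eq', Finset.mem_univ, if_true]
      simp_rw [Finset.sum_mul, Finset.mul_sum]
      have h1 : ∀ i : α, ∑ j : α, ∑ b : β, star (y i) * (M (i, b) (j, b) * y j)
          = ∑ b : β, ∑ j : α, star (y i) * (M (i, b) (j, b) * y j) :=
        fun i => Finset.sum_comm
      simp_rw [h1]
      rw [Finset.sum_comm]
    rw [key]
    exact Finset.sum_nonneg (fun b _ => hM.dotProduct_mulVec_nonneg _)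

end Assembly
end QITAux

/-- Operator-averaging step in convex split: if `ρ_{PQ} ≤ 2^k ρ_P ⊗ σ_Q` and
`τ_{PQ} = (1/n)ρ_{PQ} + ((n-1)/n) ρ_P ⊗ σ_Q`, then
`τ_{PQ} ≤ (1 + (2^k−1)/n) ρ_P ⊗ σ_Q`, and consequently
`D(ρ_{PQ}‖τ_{PQ}) ≥ D(ρ_{PQ}‖ρ_P⊗σ_Q) − log₂(1 + (2^k−1)/n)`. -/
theorem operator_averaging {dP dQ : Type*} [Fintype dP] [DecidableEq dP]
    [Fintype dQ] [DecidableEq dQ] (n : ℕ) (hn : 0 < n) (k : ℝ)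
    (ρPQ : Matrix (dP × dQ) (dP × dQ) ℂ) (hρPQ : IsState ρPQ)
    (ρP : Matrix dP dP ℂ) (hρP : ρP = ptraceRight ρPQ)
    (σQ : Matrix dQ dQ ℂ) (hσQ : IsState σQ)
    (hsupp : ∀ x : (dP × dQ) → ℂ, (ρP ⊗ₖ σQ).mulVec x = 0 → ρPQ.mulVec x = 0)
    (hle : ((2 : ℝ) ^ k • (ρP ⊗ₖ σQ) - ρPQ).PosSemidef)
    (τPQ : Matrix (dP × dQ) (dP × dQ) ℂ)
    (hτ : τPQ = (n : ℝ)⁻¹ • ρPQ + (((n : ℝ) - 1) / n) • (ρP ⊗ₖ σQ)) :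
    ((1 + ((2 : ℝ) ^ k - 1) / n) • (ρP ⊗ₖ σQ) - τPQ).PosSemidef ∧
    relEnt ρPQ τPQ ≥
      relEnt ρPQ (ρP ⊗ₖ σQ) - Real.logb 2 (1 + ((2 : ℝ) ^ k - 1) / n) := by
  classical
  have hnR : (0:ℝ) < n := by exact_mod_cast hn
  have hn1 : (1:ℝ) ≤ n := by exact_mod_cast hn
  have h2k : (0:ℝ) < (2:ℝ)^k := Real.rpow_pos_of_pos (by norm_num) k
  set S := ρP ⊗ₖ σQ with hSdef
  have hρ : ρPQ.PosSemidef := hρPQ.1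
  have hρPpsd : ρP.PosSemidef := by rw [hρP]; exact QITAux.ptraceRight_psd hρPQ.1
  have hSpsd : S.PosSemidef := QITAux.kron_psd hρPpsd hσQ.1
  have hc : (0:ℝ) < 1 + ((2:ℝ)^k - 1)/n := by
    have he : (1:ℝ) + ((2:ℝ)^k - 1)/n = ((n:ℝ) + ((2:ℝ)^k - 1))/n := by field_simp
    rw [he]
    apply div_pos _ hnR
    linarith
  have key : (1 + ((2:ℝ)^k - 1)/n) • S - τPQ = (n:ℝ)⁻¹ • ((2:ℝ)^k • S - ρPQ) := by
    rw [hτ]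
    match_scalars
    · field_simp
      ring
    · field_simp
  have part1 : ((1 + ((2:ℝ)^k - 1)/n) • S - τPQ).PosSemidef := by
    rw [key]
    exact QITAux.smul_psd hle (by positivity)
  refine ⟨part1, ?_⟩
  have hτpsd : τPQ.PosSemidef := by
    rw [hτ]
    exact (QITAux.smul_psd hρ (by positivity)).add
      (QITAux.smul_psd hSpsd (div_nonneg (by linarith) hnR.le))
  have hcS : ((1 + ((2:ℝ)^k - 1)/n) • S).PosSemidef := QITAux.smul_psd hSpsd hc.le
  have hτρ : (τPQ - (n:ℝ)⁻¹ • ρPQ).PosSemidef := by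
    have he : τPQ - (n:ℝ)⁻¹ • ρPQ = (((n:ℝ)-1)/n) • S := by rw [hτ]; module
    rw [he]
    exact QITAux.smul_psd hSpsd (div_nonneg (by linarith) hnR.le)
  have hρn : ((n:ℝ)⁻¹ • ρPQ).PosSemidef := QITAux.smul_psd hρ (by positivity)
  have hkerτ : ∀ x, τPQ *ᵥ x = 0 → ρPQ *ᵥ x = 0 := by
    intro x hx
    have h0 : star x ⬝ᵥ τPQ *ᵥ x = 0 := by rw [hx, dotProduct_zero]
    have h1 : 0 ≤ star x ⬝ᵥ ((n:ℝ)⁻¹ • ρPQ) *ᵥ x := hρn.dotProduct_mulVec_nonneg x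
    have h2 := hτρ.dotProduct_mulVec_nonneg x
    rw [Matrix.sub_mulVec, dotProduct_sub, h0, zero_sub, le_neg, neg_zero] at h2
    have h3 : star x ⬝ᵥ ((n:ℝ)⁻¹ • ρPQ) *ᵥ x = 0 := le_antisymm h2 h1
    have h4 := (hρn.dotProduct_mulVec_zero_iff x).mp h3
    rw [Matrix.smul_mulVec] at h4
    rcases smul_eq_zero.mp h4 with h | h
    · exact absurd h (inv_ne_zero hnR.ne')
    · exact h
  have hmain : ((ρPQ * mlog τPQ).trace).re ≤
      ((ρPQ * mlog ((1 + ((2:ℝ)^k - 1)/n) • S)).trace).re :=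
    QITAux.main_ineq hτpsd hcS hρ part1 hkerτ
  have hscale := QITAux.trace_mlog_smul hSpsd hρ hc hsupp
  rw [hρPQ.2, Complex.one_re, mul_one] at hscale
  have hlog2 : (0:ℝ) < Real.log 2 := Real.log_pos (by norm_num)
  rw [ge_iff_le]
  simp only [relEnt]
  rw [Matrix.mul_sub, Matrix.mul_sub, Matrix.trace_sub, Matrix.trace_sub,
    Complex.sub_re, Complex.sub_re, ← Real.log_div_log, div_sub_div_same]
  rw [div_le_div_iff₀ hlog2 hlog2]
  have hineq : ((ρPQ * mlog τPQ).trace).re ≤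
      ((ρPQ * mlog S).trace).re + Real.log (1 + ((2:ℝ)^k - 1)/n) := by
    rw [← hscale]
    exact hmain
  nlinarith [hlog2, hineq]
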